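/- There exists a closed zero-dimensional set Z ⊆ (−1,1) × ℝ such that Z meets the graph of every continuous function g : [−1,1] → ℝ, and such that for all but countably many x ∈ (−1,1) the vertical section Z_x = {y : (x,y) ∈ Z} is a singleton, while for the remaining countably many x (which form a dense subset X of (−1,1)) the section Z_x has exactly two points. -/

import Mathlib

open Filter Topology Set

noncomputable def jp (x : ℝ) : ℝ := ∑' n : ℕ, (8⁻¹ : ℝ) ^ n * (⌊(2:ℝ) ^ n * x⌋ : ℝ)
noncomputable def jm (x : ℝ) : ℝ := ∑' n : ℕ, (8⁻¹ : ℝ) ^ n * ((⌈(2:ℝ) ^ n * x⌉ : ℝ) - 1)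
noncomputable def rr (x : ℝ) : ℝ := x / (1 - x ^ 2)
noncomputable def sm (x : ℝ) : ℝ := rr x - jm x
noncomputable def sp (x : ℝ) : ℝ := rr x - jp x

def Zset : Set (ℝ × ℝ) := {p | p.1 ∈ Set.Ioo (-1:ℝ) 1 ∧ (p.2 = sm p.1 ∨ p.2 = sp p.1)}
def Xset : Set ℝ := {x | x ∈ Set.Ioo (-1:ℝ) 1 ∧ ∃ (n : ℕ) (k : ℤ), (2:ℝ) ^ n * x = (k:ℝ)}

lemma sum_geom4 : Summable (fun n : ℕ => (4⁻¹:ℝ)^n) :=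
  summable_geometric_of_lt_one (by norm_num) (by norm_num)

lemma tsum_geom4_le : ∑' n : ℕ, (4⁻¹:ℝ)^n ≤ 2 := by
  rw [tsum_geometric_of_lt_one (by norm_num) (by norm_num)]; norm_num

-- summability from a geometric bound
lemma summable_of_bd {d : ℕ → ℝ} {B : ℝ} (h : ∀ n, |d n| ≤ B * (4⁻¹:ℝ)^n) : Summable d :=
  Summable.of_norm_bounded (sum_geom4.mul_left B) (by simpa [Real.norm_eq_abs] using h)

lemma term_bd' {f : ℕ → ℝ} {K : ℝ} (h : ∀ n, |f n| ≤ (2:ℝ)^n * K) :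
    ∀ n, |(8⁻¹:ℝ)^n * f n| ≤ K * (4⁻¹:ℝ)^n := by
  intro n
  have e1 : (8⁻¹:ℝ)^n * (2:ℝ)^n = (4⁻¹:ℝ)^n := by rw [← mul_pow]; norm_num
  have h8 : (0:ℝ) ≤ (8⁻¹:ℝ)^n := by positivity
  calc |(8⁻¹:ℝ)^n * f n| = (8⁻¹:ℝ)^n * |f n| := by
        rw [abs_mul, abs_pow, abs_of_nonneg (by norm_num : (0:ℝ) ≤ 8⁻¹)]
    _ ≤ (8⁻¹:ℝ)^n * ((2:ℝ)^n * K) := by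
        exact mul_le_mul_of_nonneg_left (h n) h8
    _ = K * (4⁻¹:ℝ)^n := by rw [← mul_assoc, e1]; ring

lemma abs_floor_le (t : ℝ) : |(⌊t⌋ : ℝ)| ≤ |t| + 1 := by
  rw [abs_le]; constructor
  · nlinarith [Int.sub_one_lt_floor t, neg_abs_le t]
  · nlinarith [Int.floor_le t, le_abs_self t]

lemma abs_ceil_le (t : ℝ) : |(⌈t⌉ : ℝ) - 1| ≤ |t| + 1 := by
  rw [abs_le]; constructor
  · nlinarith [Int.le_ceil t, neg_abs_le t]
  · nlinarith [Int.ceil_lt_add_one t, le_abs_self t]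

lemma floor_term_bd (x : ℝ) :
    ∀ n : ℕ, |(⌊(2:ℝ)^n * x⌋ : ℝ)| ≤ (2:ℝ)^n * (|x| + 1) := by
  intro n
  have h1 : |(2:ℝ)^n * x| = (2:ℝ)^n * |x| := by
    rw [abs_mul, abs_pow]; norm_num
  have h2 : (1:ℝ) ≤ (2:ℝ)^n := one_le_pow₀ (by norm_num)
  have := abs_floor_le ((2:ℝ)^n * x)
  nlinarith [abs_nonneg x]

lemma ceil_term_bd (x : ℝ) :
    ∀ n : ℕ, |(⌈(2:ℝ)^n * x⌉ : ℝ) - 1| ≤ (2:ℝ)^n * (|x| + 1) := by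
  intro n
  have h1 : |(2:ℝ)^n * x| = (2:ℝ)^n * |x| := by
    rw [abs_mul, abs_pow]; norm_num
  have h2 : (1:ℝ) ≤ (2:ℝ)^n := one_le_pow₀ (by norm_num)
  have := abs_ceil_le ((2:ℝ)^n * x)
  nlinarith [abs_nonneg x]

lemma summable_jp (x : ℝ) :
    Summable (fun n : ℕ => (8⁻¹:ℝ)^n * (⌊(2:ℝ)^n * x⌋ : ℝ)) :=
  summable_of_bd (term_bd' (floor_term_bd x))

lemma summable_jm (x : ℝ) :
    Summable (fun n : ℕ => (8⁻¹:ℝ)^n * ((⌈(2:ℝ)^n * x⌉ : ℝ) - 1)) :=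
  summable_of_bd (term_bd' (ceil_term_bd x))

-- tail bound helper
lemma tailbd (d : ℕ → ℝ) (B : ℝ) (N : ℕ)
    (hd : ∀ n, |d n| ≤ B * (4⁻¹:ℝ)^n) (h0 : ∀ n < N, d n = 0) :
    |∑' n, d n| ≤ 2 * B * (4⁻¹:ℝ)^N := by
  have hB : 0 ≤ B := by
    have := hd 0; have := abs_nonneg (d 0); simp at this ⊢; nlinarith [abs_nonneg (d 0), hd 0]
  have hsum : Summable d := summable_of_bd hd
  have e1 : ∑' n, d n = ∑' i : ℕ, d (i + N) := by
    have := Summable.sum_add_tsum_nat_add N hsum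
    have hz : ∑ i ∈ Finset.range N, d i = 0 :=
      Finset.sum_eq_zero (fun i hi => h0 i (Finset.mem_range.mp hi))
    linarith [this, hz]
  have hsg : Summable (fun i : ℕ => B * (4⁻¹:ℝ)^N * (4⁻¹:ℝ)^i) :=
    sum_geom4.mul_left _
  have hsn : Summable (fun i : ℕ => ‖d (i + N)‖) := by
    apply Summable.of_norm_bounded hsg
    intro i
    simp only [Real.norm_eq_abs, abs_abs]
    calc |d (i + N)| ≤ B * (4⁻¹:ℝ)^(i+N) := hd _
      _ = B * (4⁻¹:ℝ)^N * (4⁻¹:ℝ)^i := by rw [pow_add]; ring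
  have e2 : |∑' i : ℕ, d (i + N)| ≤ ∑' i : ℕ, ‖d (i + N)‖ := by
    simpa [Real.norm_eq_abs] using norm_tsum_le_tsum_norm hsn
  have e3 : ∑' i : ℕ, ‖d (i + N)‖ ≤ ∑' i : ℕ, B * (4⁻¹:ℝ)^N * (4⁻¹:ℝ)^i := by
    apply Summable.tsum_le_tsum _ hsn hsg
    intro i
    simp only [Real.norm_eq_abs]
    calc |d (i + N)| ≤ B * (4⁻¹:ℝ)^(i+N) := hd _
      _ = B * (4⁻¹:ℝ)^N * (4⁻¹:ℝ)^i := by rw [pow_add]; ring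
  have e4 : ∑' i : ℕ, B * (4⁻¹:ℝ)^N * (4⁻¹:ℝ)^i = B * (4⁻¹:ℝ)^N * ∑' i : ℕ, (4⁻¹:ℝ)^i :=
    tsum_mul_left
  have e5 : B * (4⁻¹:ℝ)^N * ∑' i : ℕ, (4⁻¹:ℝ)^i ≤ B * (4⁻¹:ℝ)^N * 2 := by
    have : (0:ℝ) ≤ B * (4⁻¹:ℝ)^N := by positivity
    exact mul_le_mul_of_nonneg_left tsum_geom4_le this
  rw [e1]
  calc |∑' i : ℕ, d (i + N)| ≤ ∑' i : ℕ, ‖d (i + N)‖ := e2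
    _ ≤ ∑' i : ℕ, B * (4⁻¹:ℝ)^N * (4⁻¹:ℝ)^i := e3
    _ = B * (4⁻¹:ℝ)^N * ∑' i : ℕ, (4⁻¹:ℝ)^i := e4
    _ ≤ B * (4⁻¹:ℝ)^N * 2 := e5
    _ = 2 * B * (4⁻¹:ℝ)^N := by ring

lemma jp_bd {x : ℝ} (hx : |x| ≤ 1) : |jp x| ≤ 4 := by
  have h := tailbd _ ((|x| + 1)) 0 (term_bd' (floor_term_bd x)) (by intro n hn; omega)
  rw [jp]
  calc |∑' n : ℕ, (8⁻¹:ℝ)^n * (⌊(2:ℝ)^n * x⌋ : ℝ)| ≤ 2 * (|x| + 1) * (4⁻¹:ℝ)^0 := h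
    _ ≤ 4 := by simp; nlinarith

lemma jm_bd {x : ℝ} (hx : |x| ≤ 1) : |jm x| ≤ 4 := by
  have h := tailbd _ ((|x| + 1)) 0 (term_bd' (ceil_term_bd x)) (by intro n hn; omega)
  rw [jm]
  calc |∑' n : ℕ, (8⁻¹:ℝ)^n * ((⌈(2:ℝ)^n * x⌉ : ℝ) - 1)| ≤ 2 * (|x| + 1) * (4⁻¹:ℝ)^0 := h
    _ ≤ 4 := by simp; nlinarith

lemma jm_le_jp (x : ℝ) : jm x ≤ jp x := by
  apply Summable.tsum_le_tsum _ (summable_jm x) (summable_jp x)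
  intro n
  have h8 : (0:ℝ) ≤ (8⁻¹:ℝ)^n := by positivity
  apply mul_le_mul_of_nonneg_left _ h8
  have := Int.ceil_le_floor_add_one ((2:ℝ)^n * x)
  have : ((⌈(2:ℝ)^n * x⌉ : ℝ)) ≤ (⌊(2:ℝ)^n * x⌋ : ℝ) + 1 := by exact_mod_cast this
  linarith

lemma sp_le_sm (x : ℝ) : sp x ≤ sm x := by
  have := jm_le_jp x; rw [sp, sm]; linarith
-- part 2: one-sided limit estimates for jp, jm

lemma choose_N {B ε : ℝ} (hB : 0 < B) (hε : 0 < ε) :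
    ∃ N : ℕ, 0 < N ∧ 2 * B * (4⁻¹:ℝ)^N < ε := by
  obtain ⟨N₀, hN₀⟩ := exists_pow_lt_of_lt_one (show (0:ℝ) < ε / (2*B) by positivity)
    (show (4⁻¹:ℝ) < 1 by norm_num)
  refine ⟨N₀ + 1, Nat.succ_pos _, ?_⟩
  have h1 : (4⁻¹:ℝ)^(N₀+1) ≤ (4⁻¹:ℝ)^N₀ :=
    pow_le_pow_of_le_one (by norm_num) (by norm_num) (Nat.le_succ _)
  have h2 : (4⁻¹:ℝ)^(N₀+1) < ε / (2*B) := lt_of_le_of_lt h1 hN₀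
  have h3 : 0 < 2*B := by linarith
  calc 2 * B * (4⁻¹:ℝ)^(N₀+1) < 2 * B * (ε / (2*B)) := by
        apply mul_lt_mul_of_pos_left h2 h3
    _ = ε := by field_simp
  
lemma lemL (x₀ : ℝ) {ε : ℝ} (hε : 0 < ε) :
    ∃ δ > 0, ∀ u, x₀ - δ < u → u < x₀ →
      |jp u - jm x₀| < ε ∧ |jm u - jm x₀| < ε := by
  set B : ℝ := 2*|x₀| + 5 with hBdef
  have hB : 0 < B := by positivity
  obtain ⟨N, hNpos, hN⟩ := choose_N hB hε
  have hne : (Finset.range N).Nonempty := ⟨0, Finset.mem_range.mpr hNpos⟩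
  set F : ℕ → ℝ := fun n => ((2:ℝ)^n * x₀ - ((⌈(2:ℝ)^n * x₀⌉:ℝ) - 1)) / (2:ℝ)^n with hF
  set δ : ℝ := min 1 ((Finset.range N).inf' hne F) with hδdef
  have hδpos : 0 < δ := by
    apply lt_min (by norm_num)
    rw [Finset.lt_inf'_iff]
    intro i _
    have h2n : (0:ℝ) < (2:ℝ)^i := by positivity
    apply div_pos _ h2n
    have := Int.ceil_lt_add_one ((2:ℝ)^i * x₀)
    linarith
  refine ⟨δ, hδpos, ?_⟩
  intro u hu1 hu2
  have hδ1 : δ ≤ 1 := min_le_left _ _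
  have huabs : |u| ≤ |x₀| + 1 := by
    rw [abs_le]; constructor
    · nlinarith [neg_abs_le x₀]
    · nlinarith [le_abs_self x₀]
  -- key n < N facts
  have key : ∀ n < N, (⌊(2:ℝ)^n * u⌋ : ℤ) = ⌈(2:ℝ)^n * x₀⌉ - 1 ∧
      (⌈(2:ℝ)^n * u⌉ : ℤ) = ⌈(2:ℝ)^n * x₀⌉ := by
    intro n hn
    have h2n : (0:ℝ) < (2:ℝ)^n := by positivity
    have hin : δ ≤ F n := le_trans (min_le_right _ _)
      (Finset.inf'_le _ (Finset.mem_range.mpr hn))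
    have hmul : (2:ℝ)^n * δ ≤ (2:ℝ)^n * x₀ - ((⌈(2:ℝ)^n * x₀⌉:ℝ) - 1) := by
      have := (le_div_iff₀ h2n).mp (by simpa [hF] using hin)
      linarith
    have hv1 : ((⌈(2:ℝ)^n * x₀⌉:ℝ) - 1) < (2:ℝ)^n * u := by
      have : (2:ℝ)^n * (x₀ - δ) < (2:ℝ)^n * u := by
        apply mul_lt_mul_of_pos_left _ h2n; linarith
      nlinarith
    have hv2 : (2:ℝ)^n * u < (2:ℝ)^n * x₀ :=
      mul_lt_mul_of_pos_left hu2 h2n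
    have hceilx : (2:ℝ)^n * x₀ ≤ ((⌈(2:ℝ)^n * x₀⌉:ℝ)) := Int.le_ceil _
    constructor
    · rw [Int.floor_eq_iff]
      constructor
      · push_cast; linarith
      · push_cast; linarith
    · rw [Int.ceil_eq_iff]
      constructor
      · push_cast; linarith
      · push_cast; linarith
  constructor
  · -- jp u - jm x₀
    set d : ℕ → ℝ := fun n =>
      (8⁻¹:ℝ)^n * ((⌊(2:ℝ)^n * u⌋ : ℝ) - ((⌈(2:ℝ)^n * x₀⌉ : ℝ) - 1)) with hd
    have heq : jp u - jm x₀ = ∑' n, d n := by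
      rw [jp, jm, ← Summable.tsum_sub (summable_jp u) (summable_jm x₀)]
      apply tsum_congr; intro n; simp [hd]; ring
    have hbd : ∀ n, |d n| ≤ B * (4⁻¹:ℝ)^n := by
      apply term_bd'
      intro n
      have b1 := floor_term_bd u n
      have b2 := ceil_term_bd x₀ n
      have h2n : (0:ℝ) < (2:ℝ)^n := by positivity
      calc |(⌊(2:ℝ)^n * u⌋ : ℝ) - ((⌈(2:ℝ)^n * x₀⌉ : ℝ) - 1)|
          ≤ |(⌊(2:ℝ)^n * u⌋ : ℝ)| + |(⌈(2:ℝ)^n * x₀⌉ : ℝ) - 1| := abs_sub _ _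
        _ ≤ (2:ℝ)^n * (|u| + 1) + (2:ℝ)^n * (|x₀| + 1) := by linarith
        _ ≤ (2:ℝ)^n * B := by rw [hBdef]; nlinarith
    have h0 : ∀ n < N, d n = 0 := by
      intro n hn
      have := (key n hn).1
      have hc : (⌊(2:ℝ)^n * u⌋ : ℝ) = (⌈(2:ℝ)^n * x₀⌉ : ℝ) - 1 := by
        exact_mod_cast congrArg (fun z : ℤ => (z:ℝ)) this
      simp [hd, hc]
    rw [heq]
    exact lt_of_le_of_lt (tailbd d B N hbd h0) hN
  · -- jm u - jm x₀
    set d : ℕ → ℝ := fun n =>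
      (8⁻¹:ℝ)^n * ((⌈(2:ℝ)^n * u⌉ : ℝ) - (⌈(2:ℝ)^n * x₀⌉ : ℝ)) with hd
    have heq : jm u - jm x₀ = ∑' n, d n := by
      rw [jm, jm, ← Summable.tsum_sub (summable_jm u) (summable_jm x₀)]
      apply tsum_congr; intro n; simp [hd]; ring
    have hbd : ∀ n, |d n| ≤ B * (4⁻¹:ℝ)^n := by
      apply term_bd'
      intro n
      have b1 := ceil_term_bd u n
      have b2 := ceil_term_bd x₀ n
      have h2n : (0:ℝ) < (2:ℝ)^n := by positivity
      calc |(⌈(2:ℝ)^n * u⌉ : ℝ) - (⌈(2:ℝ)^n * x₀⌉ : ℝ)|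
          = |((⌈(2:ℝ)^n * u⌉ : ℝ) - 1) - ((⌈(2:ℝ)^n * x₀⌉ : ℝ) - 1)| := by ring_nf
        _ ≤ |(⌈(2:ℝ)^n * u⌉ : ℝ) - 1| + |(⌈(2:ℝ)^n * x₀⌉ : ℝ) - 1| := abs_sub _ _
        _ ≤ (2:ℝ)^n * (|u| + 1) + (2:ℝ)^n * (|x₀| + 1) := by linarith
        _ ≤ (2:ℝ)^n * B := by rw [hBdef]; nlinarith
    have h0 : ∀ n < N, d n = 0 := by
      intro n hn
      have := (key n hn).2
      have hc : (⌈(2:ℝ)^n * u⌉ : ℝ) = (⌈(2:ℝ)^n * x₀⌉ : ℝ) := by exact_mod_cast this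
      simp [hd, hc]
    rw [heq]
    exact lt_of_le_of_lt (tailbd d B N hbd h0) hN

lemma lemR (x₀ : ℝ) {ε : ℝ} (hε : 0 < ε) :
    ∃ δ > 0, ∀ u, x₀ < u → u < x₀ + δ →
      |jp u - jp x₀| < ε ∧ |jm u - jp x₀| < ε := by
  set B : ℝ := 2*|x₀| + 5 with hBdef
  have hB : 0 < B := by positivity
  obtain ⟨N, hNpos, hN⟩ := choose_N hB hε
  have hne : (Finset.range N).Nonempty := ⟨0, Finset.mem_range.mpr hNpos⟩
  set F : ℕ → ℝ := fun n => (((⌊(2:ℝ)^n * x₀⌋:ℝ) + 1) - (2:ℝ)^n * x₀) / (2:ℝ)^n with hF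
  set δ : ℝ := min 1 ((Finset.range N).inf' hne F) with hδdef
  have hδpos : 0 < δ := by
    apply lt_min (by norm_num)
    rw [Finset.lt_inf'_iff]
    intro i _
    have h2n : (0:ℝ) < (2:ℝ)^i := by positivity
    apply div_pos _ h2n
    have := Int.lt_floor_add_one ((2:ℝ)^i * x₀)
    linarith
  refine ⟨δ, hδpos, ?_⟩
  intro u hu1 hu2
  have hδ1 : δ ≤ 1 := min_le_left _ _
  have huabs : |u| ≤ |x₀| + 1 := by
    rw [abs_le]; constructor
    · nlinarith [neg_abs_le x₀]
    · nlinarith [le_abs_self x₀]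
  have key : ∀ n < N, (⌊(2:ℝ)^n * u⌋ : ℤ) = ⌊(2:ℝ)^n * x₀⌋ ∧
      (⌈(2:ℝ)^n * u⌉ : ℤ) = ⌊(2:ℝ)^n * x₀⌋ + 1 := by
    intro n hn
    have h2n : (0:ℝ) < (2:ℝ)^n := by positivity
    have hin : δ ≤ F n := le_trans (min_le_right _ _)
      (Finset.inf'_le _ (Finset.mem_range.mpr hn))
    have hmul : (2:ℝ)^n * δ ≤ ((⌊(2:ℝ)^n * x₀⌋:ℝ) + 1) - (2:ℝ)^n * x₀ := by
      have := (le_div_iff₀ h2n).mp (by simpa [hF] using hin)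
      linarith
    have hv2 : (2:ℝ)^n * u < (2:ℝ)^n * x₀ + (2:ℝ)^n * δ := by
      have : (2:ℝ)^n * u < (2:ℝ)^n * (x₀ + δ) := mul_lt_mul_of_pos_left hu2 h2n
      nlinarith
    have hv1 : (2:ℝ)^n * x₀ < (2:ℝ)^n * u := mul_lt_mul_of_pos_left hu1 h2n
    have hfloorx : ((⌊(2:ℝ)^n * x₀⌋:ℝ)) ≤ (2:ℝ)^n * x₀ := Int.floor_le _
    constructor
    · rw [Int.floor_eq_iff]
      constructor
      · push_cast; linarith
      · push_cast; linarith
    · rw [Int.ceil_eq_iff]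
      constructor
      · push_cast; linarith
      · push_cast; linarith
  constructor
  · set d : ℕ → ℝ := fun n =>
      (8⁻¹:ℝ)^n * ((⌊(2:ℝ)^n * u⌋ : ℝ) - (⌊(2:ℝ)^n * x₀⌋ : ℝ)) with hd
    have heq : jp u - jp x₀ = ∑' n, d n := by
      rw [jp, jp, ← Summable.tsum_sub (summable_jp u) (summable_jp x₀)]
      apply tsum_congr; intro n; simp [hd]; ring
    have hbd : ∀ n, |d n| ≤ B * (4⁻¹:ℝ)^n := by
      apply term_bd'
      intro n
      have b1 := floor_term_bd u n
      have b2 := floor_term_bd x₀ n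
      calc |(⌊(2:ℝ)^n * u⌋ : ℝ) - (⌊(2:ℝ)^n * x₀⌋ : ℝ)|
          ≤ |(⌊(2:ℝ)^n * u⌋ : ℝ)| + |(⌊(2:ℝ)^n * x₀⌋ : ℝ)| := abs_sub _ _
        _ ≤ (2:ℝ)^n * (|u| + 1) + (2:ℝ)^n * (|x₀| + 1) := by linarith
        _ ≤ (2:ℝ)^n * B := by rw [hBdef]; nlinarith [pow_pos (show (0:ℝ)<2 by norm_num) n]
    have h0 : ∀ n < N, d n = 0 := by
      intro n hn
      have := (key n hn).1
      have hc : (⌊(2:ℝ)^n * u⌋ : ℝ) = (⌊(2:ℝ)^n * x₀⌋ : ℝ) := by exact_mod_cast this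
      simp [hd, hc]
    rw [heq]
    exact lt_of_le_of_lt (tailbd d B N hbd h0) hN
  · set d : ℕ → ℝ := fun n =>
      (8⁻¹:ℝ)^n * (((⌈(2:ℝ)^n * u⌉ : ℝ) - 1) - (⌊(2:ℝ)^n * x₀⌋ : ℝ)) with hd
    have heq : jm u - jp x₀ = ∑' n, d n := by
      rw [jm, jp, ← Summable.tsum_sub (summable_jm u) (summable_jp x₀)]
      apply tsum_congr; intro n; simp [hd]; ring
    have hbd : ∀ n, |d n| ≤ B * (4⁻¹:ℝ)^n := by
      apply term_bd'
      intro n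
      have b1 := ceil_term_bd u n
      have b2 := floor_term_bd x₀ n
      calc |((⌈(2:ℝ)^n * u⌉ : ℝ) - 1) - (⌊(2:ℝ)^n * x₀⌋ : ℝ)|
          ≤ |(⌈(2:ℝ)^n * u⌉ : ℝ) - 1| + |(⌊(2:ℝ)^n * x₀⌋ : ℝ)| := abs_sub _ _
        _ ≤ (2:ℝ)^n * (|u| + 1) + (2:ℝ)^n * (|x₀| + 1) := by linarith
        _ ≤ (2:ℝ)^n * B := by rw [hBdef]; nlinarith [pow_pos (show (0:ℝ)<2 by norm_num) n]
    have h0 : ∀ n < N, d n = 0 := by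
      intro n hn
      have := (key n hn).2
      have hc : (⌈(2:ℝ)^n * u⌉ : ℝ) = (⌊(2:ℝ)^n * x₀⌋ : ℝ) + 1 := by exact_mod_cast this
      simp [hd, hc]
    rw [heq]
    exact lt_of_le_of_lt (tailbd d B N hbd h0) hN
-- part 3: s-level estimates and sequence limits

lemma rr_contAt {x₀ : ℝ} (hx : x₀ ∈ Set.Ioo (-1:ℝ) 1) : ContinuousAt rr x₀ := by
  have hne : 1 - x₀^2 ≠ 0 := by
    obtain ⟨h1, h2⟩ := hx; nlinarith
  have h1 : ContinuousAt (fun x : ℝ => 1 - x^2) x₀ := by fun_prop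
  have h2 : ContinuousAt (fun x : ℝ => x) x₀ := continuousAt_id
  have h3 := h2.div h1 hne
  exact h3

lemma sL {d : ℝ} (hd : d ∈ Set.Ioo (-1:ℝ) 1) {ε : ℝ} (hε : 0 < ε) :
    ∃ δ > 0, ∀ x, d - δ < x → x < d →
      |sm x - sm d| < ε ∧ |sp x - sm d| < ε := by
  have hrr := rr_contAt hd
  rw [Metric.continuousAt_iff] at hrr
  obtain ⟨δ₁, hδ₁, h₁⟩ := hrr (ε/2) (by linarith)
  obtain ⟨δ₂, hδ₂, h₂⟩ := lemL d (show (0:ℝ) < ε/2 by linarith)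
  refine ⟨min δ₁ δ₂, lt_min hδ₁ hδ₂, ?_⟩
  intro x hx1 hx2
  have e1 : |rr x - rr d| < ε/2 := by
    have : dist x d < δ₁ := by
      rw [Real.dist_eq, abs_lt]
      constructor <;> [linarith [min_le_left δ₁ δ₂]; linarith]
    simpa [Real.dist_eq] using h₁ this
  have e2 := h₂ x (by linarith [min_le_right δ₁ δ₂]) hx2
  constructor
  · have : sm x - sm d = (rr x - rr d) - (jm x - jm d) := by rw [sm, sm]; ring
    rw [this]
    calc |(rr x - rr d) - (jm x - jm d)| ≤ |rr x - rr d| + |jm x - jm d| := abs_sub _ _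
      _ < ε := by have := e2.2; linarith
  · have : sp x - sm d = (rr x - rr d) - (jp x - jm d) := by rw [sp, sm]; ring
    rw [this]
    calc |(rr x - rr d) - (jp x - jm d)| ≤ |rr x - rr d| + |jp x - jm d| := abs_sub _ _
      _ < ε := by have := e2.1; linarith

lemma sR {d : ℝ} (hd : d ∈ Set.Ioo (-1:ℝ) 1) {ε : ℝ} (hε : 0 < ε) :
    ∃ δ > 0, ∀ x, d < x → x < d + δ →
      |sm x - sp d| < ε ∧ |sp x - sp d| < ε := by
  have hrr := rr_contAt hd
  rw [Metric.continuousAt_iff] at hrr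
  obtain ⟨δ₁, hδ₁, h₁⟩ := hrr (ε/2) (by linarith)
  obtain ⟨δ₂, hδ₂, h₂⟩ := lemR d (show (0:ℝ) < ε/2 by linarith)
  refine ⟨min δ₁ δ₂, lt_min hδ₁ hδ₂, ?_⟩
  intro x hx1 hx2
  have e1 : |rr x - rr d| < ε/2 := by
    have : dist x d < δ₁ := by
      rw [Real.dist_eq, abs_lt]
      constructor <;> [linarith; linarith [min_le_left δ₁ δ₂]]
    simpa [Real.dist_eq] using h₁ this
  have e2 := h₂ x hx1 (by linarith [min_le_right δ₁ δ₂])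
  constructor
  · have : sm x - sp d = (rr x - rr d) - (jm x - jp d) := by rw [sp, sm]; ring
    rw [this]
    calc |(rr x - rr d) - (jm x - jp d)| ≤ |rr x - rr d| + |jm x - jp d| := abs_sub _ _
      _ < ε := by have := e2.2; linarith
  · have : sp x - sp d = (rr x - rr d) - (jp x - jp d) := by rw [sp, sp]; ring
    rw [this]
    calc |(rr x - rr d) - (jp x - jp d)| ≤ |rr x - rr d| + |jp x - jp d| := abs_sub _ _
      _ < ε := by have := e2.1; linarith

lemma seqL {x₀ : ℝ} (hx : x₀ ∈ Set.Ioo (-1:ℝ) 1) (a : ℕ → ℝ)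
    (ha : ∀ n, a n < x₀) (hta : Tendsto a atTop (𝓝 x₀)) :
    Tendsto (fun n => sm (a n)) atTop (𝓝 (sm x₀)) ∧
    Tendsto (fun n => sp (a n)) atTop (𝓝 (sm x₀)) := by
  constructor
  · rw [Metric.tendsto_atTop]
    intro ε hε
    obtain ⟨δ, hδ, h⟩ := sL hx hε
    obtain ⟨N, hN⟩ := Metric.tendsto_atTop.mp hta δ hδ
    refine ⟨N, fun n hn => ?_⟩
    have := hN n hn
    rw [Real.dist_eq, abs_lt] at this
    rw [Real.dist_eq]
    exact (h (a n) (by linarith) (ha n)).1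
  · rw [Metric.tendsto_atTop]
    intro ε hε
    obtain ⟨δ, hδ, h⟩ := sL hx hε
    obtain ⟨N, hN⟩ := Metric.tendsto_atTop.mp hta δ hδ
    refine ⟨N, fun n hn => ?_⟩
    have := hN n hn
    rw [Real.dist_eq, abs_lt] at this
    rw [Real.dist_eq]
    exact (h (a n) (by linarith) (ha n)).2

lemma seqR {x₀ : ℝ} (hx : x₀ ∈ Set.Ioo (-1:ℝ) 1) (a : ℕ → ℝ)
    (ha : ∀ n, x₀ < a n) (hta : Tendsto a atTop (𝓝 x₀)) :
    Tendsto (fun n => sm (a n)) atTop (𝓝 (sp x₀)) ∧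
    Tendsto (fun n => sp (a n)) atTop (𝓝 (sp x₀)) := by
  constructor
  · rw [Metric.tendsto_atTop]
    intro ε hε
    obtain ⟨δ, hδ, h⟩ := sR hx hε
    obtain ⟨N, hN⟩ := Metric.tendsto_atTop.mp hta δ hδ
    refine ⟨N, fun n hn => ?_⟩
    have := hN n hn
    rw [Real.dist_eq, abs_lt] at this
    rw [Real.dist_eq]
    exact (h (a n) (ha n) (by linarith)).1
  · rw [Metric.tendsto_atTop]
    intro ε hε
    obtain ⟨δ, hδ, h⟩ := sR hx hε
    obtain ⟨N, hN⟩ := Metric.tendsto_atTop.mp hta δ hδ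
    refine ⟨N, fun n hn => ?_⟩
    have := hN n hn
    rw [Real.dist_eq, abs_lt] at this
    rw [Real.dist_eq]
    exact (h (a n) (ha n) (by linarith)).2

-- dyadic / nondyadic structure
lemma jm_eq_jp_of_nondyadic {x : ℝ} (h : ∀ (n : ℕ) (k : ℤ), (2:ℝ)^n * x ≠ (k:ℝ)) :
    jm x = jp x := by
  rw [jm, jp]
  apply tsum_congr
  intro n
  congr 1
  set t : ℝ := (2:ℝ)^n * x with ht
  have hfl : (⌊t⌋:ℝ) < t := by
    rcases lt_or_eq_of_le (Int.floor_le t) with h' | h'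
    · exact h'
    · exact absurd h'.symm (h n ⌊t⌋)
  have h1 : ⌊t⌋ + 1 ≤ ⌈t⌉ := Int.lt_iff_add_one_le.mp (Int.lt_ceil.mpr hfl)
  have h2 : ⌈t⌉ ≤ ⌊t⌋ + 1 := Int.ceil_le_floor_add_one t
  have : ⌈t⌉ = ⌊t⌋ + 1 := le_antisymm h2 h1
  rw [this]; push_cast; ring

lemma jm_lt_jp_of_dyadic {x : ℝ} {m : ℕ} {k : ℤ} (h : (2:ℝ)^m * x = (k:ℝ)) :
    jm x + (8⁻¹:ℝ)^m ≤ jp x := by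
  set d : ℕ → ℝ := fun n =>
    (8⁻¹:ℝ)^n * ((⌊(2:ℝ)^n * x⌋ : ℝ) - ((⌈(2:ℝ)^n * x⌉ : ℝ) - 1)) with hd
  have hsum : Summable d := by
    have := (summable_jp x).sub (summable_jm x)
    convert this using 2 with n
    case e'_3 => rfl
    simp [hd]; ring
  have hnn : ∀ n, 0 ≤ d n := by
    intro n
    apply mul_nonneg (by positivity)
    have := Int.ceil_le_floor_add_one ((2:ℝ)^n * x)
    have : ((⌈(2:ℝ)^n * x⌉:ℝ)) ≤ (⌊(2:ℝ)^n * x⌋:ℝ) + 1 := by exact_mod_cast this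
    linarith
  have hdm : d m = (8⁻¹:ℝ)^m := by
    simp only [hd, h, Int.floor_intCast, Int.ceil_intCast]
    ring
  have hle : (8⁻¹:ℝ)^m ≤ ∑' n, d n := by
    rw [← hdm]
    exact Summable.le_tsum hsum m (fun j _ => hnn j)
  have heq : ∑' n, d n = jp x - jm x := by
    rw [jp, jm, ← Summable.tsum_sub (summable_jp x) (summable_jm x)]
    apply tsum_congr; intro n; simp [hd]; ring
  linarith [hle, heq.le, heq.ge]

lemma sp_lt_sm_of_dyadic {x : ℝ} {m : ℕ} {k : ℤ} (h : (2:ℝ)^m * x = (k:ℝ)) :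
    sp x < sm x := by
  have h1 := jm_lt_jp_of_dyadic h
  have h2 : (0:ℝ) < (8⁻¹:ℝ)^m := by positivity
  rw [sp, sm]; linarith

lemma sm_eq_sp_of_nondyadic {x : ℝ} (h : ∀ (n : ℕ) (k : ℤ), (2:ℝ)^n * x ≠ (k:ℝ)) :
    sm x = sp x := by
  rw [sm, sp, jm_eq_jp_of_nondyadic h]
-- part 4: Z is closed

lemma zmem_y {p : ℝ × ℝ} (hp : p ∈ Zset) : p.2 = sm p.1 ∨ p.2 = sp p.1 := hp.2

lemma zset_closed : IsClosed Zset := by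
  apply IsSeqClosed.isClosed
  intro z p hz htz
  have htx : Tendsto (fun n => (z n).1) atTop (𝓝 p.1) :=
    (continuous_fst.tendsto p).comp htz
  have hty : Tendsto (fun n => (z n).2) atTop (𝓝 p.2) :=
    (continuous_snd.tendsto p).comp htz
  -- p.1 ∈ Ioo
  have hyb : ∃ M : ℝ, ∀ n, |(z n).2| ≤ M := by
    obtain ⟨M₁, hM₁⟩ := hty.bddAbove_range
    obtain ⟨M₂, hM₂⟩ := hty.bddBelow_range
    refine ⟨max M₁ (-M₂), fun n => ?_⟩
    rw [abs_le]
    constructor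
    · have h := hM₂ (Set.mem_range_self n)
      have h2 := le_max_right M₁ (-M₂)
      linarith
    · have h := hM₁ (Set.mem_range_self n)
      have h2 := le_max_left M₁ (-M₂)
      linarith
  obtain ⟨M, hM⟩ := hyb
  have hx1 : p.1 ∈ Set.Icc (-1:ℝ) 1 := by
    have : ∀ n, (z n).1 ∈ Set.Icc (-1:ℝ) 1 := fun n => Set.mem_Icc_of_Ioo (hz n).1
    exact isClosed_Icc.mem_of_tendsto htx (Eventually.of_forall this)
  have hxIoo : p.1 ∈ Set.Ioo (-1:ℝ) 1 := by
    rcases hx1.1.lt_or_eq with h1 | h1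
    · rcases hx1.2.lt_or_eq with h2 | h2
      · exact ⟨h1, h2⟩
      · -- p.1 = 1 : contradiction
        exfalso
        have hsq : Tendsto (fun n => 1 - (z n).1^2) atTop (𝓝 (1 - p.1^2)) := by
          have : Tendsto (fun n => (z n).1^2) atTop (𝓝 (p.1^2)) := (htx.pow 2)
          simpa using (tendsto_const_nhds.sub this)
        rw [h2] at hsq; norm_num at hsq
        have hev : ∀ᶠ n in atTop, |1 - (z n).1 ^ 2| < 1 / (2 * (M + 5)) := by
          have hpos : (0:ℝ) < 1 / (2 * (M + 5)) := by
            have : (0:ℝ) ≤ M := le_trans (abs_nonneg _) (hM 0)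
            positivity
          exact Metric.tendsto_nhds.mp hsq _ hpos |>.mono (fun n h => by
            simpa [Real.dist_eq] using h)
        have hev2 : ∀ᶠ n in atTop, (1:ℝ)/2 < (z n).1 := by
          have := Metric.tendsto_nhds.mp htx (p.1 - 1/2) (by rw [h2]; norm_num)
          apply this.mono
          intro n h
          rw [Real.dist_eq, abs_lt] at h
          linarith
        obtain ⟨n, h5, h6⟩ := (hev.and hev2).exists
        have hMnn : (0:ℝ) ≤ M := le_trans (abs_nonneg _) (hM 0)
        have hz1 : (z n).1 ∈ Set.Ioo (-1:ℝ) 1 := (hz n).1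
        have hd : 0 < 1 - (z n).1^2 := by nlinarith [hz1.1, hz1.2]
        have habs : 1 - (z n).1 ^ 2 < 1 / (2 * (M + 5)) := by
          have := abs_lt.mp h5; linarith [this.2]
        have hrr : rr (z n).1 > M + 5 := by
          rw [rr]
          rw [gt_iff_lt, lt_div_iff₀ hd]
          have h7 : (M+5) * (1 - (z n).1^2) < (M+5) * (1 / (2 * (M + 5))) := by
            apply mul_lt_mul_of_pos_left habs (by linarith)
          have h8 : (M+5) * (1 / (2 * (M + 5))) = 1/2 := by field_simp
          linarith
        have hj : |(z n).2 - rr (z n).1| ≤ 4 := by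
          have hzx : |(z n).1| ≤ 1 := abs_le.mpr ⟨hz1.1.le, hz1.2.le⟩
          rcases zmem_y (hz n) with h | h
          · rw [h, sm]; simpa [abs_sub_comm] using jm_bd hzx
          · rw [h, sp]; simpa [abs_sub_comm] using jp_bd hzx
        have := hM n
        have := abs_le.mp hj
        have := abs_le.mp (hM n)
        linarith [this.2]
    · -- p.1 = -1 : contradiction
      exfalso
      have hsq : Tendsto (fun n => 1 - (z n).1^2) atTop (𝓝 (1 - p.1^2)) := by
        have : Tendsto (fun n => (z n).1^2) atTop (𝓝 (p.1^2)) := (htx.pow 2)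
        simpa using (tendsto_const_nhds.sub this)
      rw [← h1] at hsq; norm_num at hsq
      have hev : ∀ᶠ n in atTop, |1 - (z n).1 ^ 2| < 1 / (2 * (M + 5)) := by
        have hpos : (0:ℝ) < 1 / (2 * (M + 5)) := by
          have : (0:ℝ) ≤ M := le_trans (abs_nonneg _) (hM 0)
          positivity
        exact Metric.tendsto_nhds.mp hsq _ hpos |>.mono (fun n h => by
          simpa [Real.dist_eq] using h)
      have hev2 : ∀ᶠ n in atTop, (z n).1 < -(1:ℝ)/2 := by
        have := Metric.tendsto_nhds.mp htx (-1/2 - p.1) (by rw [← h1]; norm_num)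
        apply this.mono
        intro n h
        rw [Real.dist_eq, abs_lt] at h
        linarith
      obtain ⟨n, h5, h6⟩ := (hev.and hev2).exists
      have hMnn : (0:ℝ) ≤ M := le_trans (abs_nonneg _) (hM 0)
      have hz1 : (z n).1 ∈ Set.Ioo (-1:ℝ) 1 := (hz n).1
      have hd : 0 < 1 - (z n).1^2 := by nlinarith [hz1.1, hz1.2]
      have habs : 1 - (z n).1 ^ 2 < 1 / (2 * (M + 5)) := by
        have := abs_lt.mp h5; linarith [this.2]
      have hrr : rr (z n).1 < -(M + 5) := by
        rw [rr]
        rw [div_lt_iff₀ hd]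
        have h7 : -(M+5) * (1 / (2 * (M + 5))) < -(M+5) * (1 - (z n).1^2) := by
          have : -(M+5) < 0 := by linarith
          nlinarith
        have h8 : -(M+5) * (1 / (2 * (M + 5))) = -(1/2) := by
          have hM5 : M + 5 ≠ 0 := by linarith
          field_simp
        linarith
      have hj : |(z n).2 - rr (z n).1| ≤ 4 := by
        have hzx : |(z n).1| ≤ 1 := abs_le.mpr ⟨hz1.1.le, hz1.2.le⟩
        rcases zmem_y (hz n) with h | h
        · rw [h, sm]; simpa [abs_sub_comm] using jm_bd hzx
        · rw [h, sp]; simpa [abs_sub_comm] using jp_bd hzx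
      have := abs_le.mp hj
      have := abs_le.mp (hM n)
      linarith [this.1]
  -- now the y-coordinate
  refine ⟨hxIoo, ?_⟩
  by_cases hfl : ∃ᶠ n in atTop, (z n).1 < p.1
  · left
    obtain ⟨φ, hφ, hφl⟩ := Filter.extraction_of_frequently_atTop hfl
    have htx' : Tendsto (fun n => (z (φ n)).1) atTop (𝓝 p.1) :=
      htx.comp hφ.tendsto_atTop
    have hty' : Tendsto (fun n => (z (φ n)).2) atTop (𝓝 p.2) :=
      hty.comp hφ.tendsto_atTop
    obtain ⟨hsm, hsp⟩ := seqL hxIoo (fun n => (z (φ n)).1) hφl htx'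
    have : Tendsto (fun n => (z (φ n)).2) atTop (𝓝 (sm p.1)) := by
      rw [Metric.tendsto_atTop]
      intro ε hε
      obtain ⟨N₁, hN₁⟩ := Metric.tendsto_atTop.mp hsm ε hε
      obtain ⟨N₂, hN₂⟩ := Metric.tendsto_atTop.mp hsp ε hε
      refine ⟨max N₁ N₂, fun n hn => ?_⟩
      rcases zmem_y (hz (φ n)) with h | h
      · rw [h]; exact hN₁ n (le_trans (le_max_left _ _) hn)
      · rw [h]; exact hN₂ n (le_trans (le_max_right _ _) hn)
    exact tendsto_nhds_unique hty' this
  · by_cases hfr : ∃ᶠ n in atTop, p.1 < (z n).1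
    · right
      obtain ⟨φ, hφ, hφl⟩ := Filter.extraction_of_frequently_atTop hfr
      have htx' : Tendsto (fun n => (z (φ n)).1) atTop (𝓝 p.1) :=
        htx.comp hφ.tendsto_atTop
      have hty' : Tendsto (fun n => (z (φ n)).2) atTop (𝓝 p.2) :=
        hty.comp hφ.tendsto_atTop
      obtain ⟨hsm, hsp⟩ := seqR hxIoo (fun n => (z (φ n)).1) hφl htx'
      have : Tendsto (fun n => (z (φ n)).2) atTop (𝓝 (sp p.1)) := by
        rw [Metric.tendsto_atTop]
        intro ε hε
        obtain ⟨N₁, hN₁⟩ := Metric.tendsto_atTop.mp hsm ε hε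
        obtain ⟨N₂, hN₂⟩ := Metric.tendsto_atTop.mp hsp ε hε
        refine ⟨max N₁ N₂, fun n hn => ?_⟩
        rcases zmem_y (hz (φ n)) with h | h
        · rw [h]; exact hN₁ n (le_trans (le_max_left _ _) hn)
        · rw [h]; exact hN₂ n (le_trans (le_max_right _ _) hn)
      exact tendsto_nhds_unique hty' this
    · -- eventually equal
      rw [Filter.not_frequently] at hfl hfr
      have heq : ∀ᶠ n in atTop, (z n).1 = p.1 := by
        filter_upwards [hfl, hfr] with n h1 h2
        push_neg at h1 h2
        linarith
      have hfy : ∃ᶠ n in atTop, ((z n).2 = sm p.1 ∨ (z n).2 = sp p.1) := by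
        apply Filter.Eventually.frequently
        filter_upwards [heq] with n h
        rcases zmem_y (hz n) with h' | h'
        · left; rw [h', h]
        · right; rw [h', h]
      rcases Filter.frequently_or_distrib.mp hfy with hc | hc
      · left
        obtain ⟨φ, hφ, hφl⟩ := Filter.extraction_of_frequently_atTop hc
        have hty' : Tendsto (fun n => (z (φ n)).2) atTop (𝓝 p.2) :=
          hty.comp hφ.tendsto_atTop
        have : Tendsto (fun n => (z (φ n)).2) atTop (𝓝 (sm p.1)) := by
          simp only [funext hφl]; exact tendsto_const_nhds
        exact tendsto_nhds_unique hty' this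
      · right
        obtain ⟨φ, hφ, hφl⟩ := Filter.extraction_of_frequently_atTop hc
        have hty' : Tendsto (fun n => (z (φ n)).2) atTop (𝓝 p.2) :=
          hty.comp hφ.tendsto_atTop
        have : Tendsto (fun n => (z (φ n)).2) atTop (𝓝 (sp p.1)) := by
          simp only [funext hφl]; exact tendsto_const_nhds
        exact tendsto_nhds_unique hty' this
-- part 5: total disconnectedness

lemma exists_dyadic_btwn {a b : ℝ} (hab : a < b) :
    ∃ (n : ℕ) (k : ℤ), a < (k:ℝ) / (2:ℝ)^n ∧ (k:ℝ) / (2:ℝ)^n < b := by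
  obtain ⟨n, hn⟩ := exists_pow_lt_of_lt_one (show (0:ℝ) < b - a by linarith)
    (show (2⁻¹:ℝ) < 1 by norm_num)
  have h2n : (0:ℝ) < (2:ℝ)^n := by positivity
  have h2i : (2⁻¹:ℝ)^n = ((2:ℝ)^n)⁻¹ := by
    rw [inv_pow]
  refine ⟨n, ⌊(2:ℝ)^n * a⌋ + 1, ?_, ?_⟩
  · rw [lt_div_iff₀ h2n]
    push_cast
    have := Int.lt_floor_add_one ((2:ℝ)^n * a)
    linarith
  · rw [div_lt_iff₀ h2n]
    push_cast
    have h1 := Int.floor_le ((2:ℝ)^n * a)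
    have h2 : ((2:ℝ)^n)⁻¹ < b - a := by rw [← h2i]; exact hn
    have h3 : (1:ℝ) < (b - a) * (2:ℝ)^n := by
      have h4 := mul_lt_mul_of_pos_right h2 h2n
      rw [inv_mul_cancel₀ (ne_of_gt h2n)] at h4
      linarith
    nlinarith
  
lemma dyadic_val {n : ℕ} {k : ℤ} : (2:ℝ)^n * ((k:ℝ) / (2:ℝ)^n) = (k:ℝ) := by
  have h2n : ((2:ℝ)^n) ≠ 0 := by positivity
  field_simp

lemma sep {t : Set (ℝ × ℝ)} (hts : t ⊆ Zset) (hconn : IsPreconnected t)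
    {d : ℝ} (hd : d ∈ Set.Ioo (-1:ℝ) 1) {m' : ℕ} {k : ℤ} (hdy : (2:ℝ)^m' * d = (k:ℝ))
    {p q : ℝ × ℝ} (hp : p ∈ t) (hq : q ∈ t)
    (hp1 : p.1 < d ∨ (p.1 = d ∧ p.2 = sm d)) (hq1 : d < q.1 ∨ (q.1 = d ∧ q.2 = sp d)) :
    False := by
  have hgap : sp d < sm d := sp_lt_sm_of_dyadic hdy
  set m : ℝ := (sm d + sp d) / 2 with hm
  have hm1 : m < sm d := by rw [hm]; linarith
  have hm2 : sp d < m := by rw [hm]; linarith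
  have hε : (0:ℝ) < (sm d - sp d) / 2 := by linarith
  obtain ⟨δL, hδL, hL⟩ := sL hd hε
  obtain ⟨δR, hδR, hR⟩ := sR hd hε
  set O₁ : Set (ℝ × ℝ) := {z | z.1 < d} ∪ {z | z.1 < d + δR ∧ m < z.2} with hO₁
  set O₂ : Set (ℝ × ℝ) := {z | d < z.1} ∪ {z | d - δL < z.1 ∧ z.2 < m} with hO₂
  have ho₁ : IsOpen O₁ := by
    apply IsOpen.union
    · exact isOpen_lt continuous_fst continuous_const
    · exact IsOpen.inter (isOpen_lt continuous_fst continuous_const)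
        (isOpen_lt continuous_const continuous_snd)
  have ho₂ : IsOpen O₂ := by
    apply IsOpen.union
    · exact isOpen_lt continuous_const continuous_fst
    · exact IsOpen.inter (isOpen_lt continuous_const continuous_fst)
        (isOpen_lt continuous_snd continuous_const)
  have hcov : t ⊆ O₁ ∪ O₂ := by
    intro z hz
    have hzZ := hts hz
    rcases lt_trichotomy z.1 d with h | h | h
    · left; left; exact h
    · rcases hzZ.2 with hy | hy
      · left; right
        constructor
        · rw [h]; linarith
        · rw [hy, h]; exact hm1
      · right; right
        constructor
        · rw [h]; linarith
        · rw [hy, h]; exact hm2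
    · right; left; exact h
  have hdis : (t ∩ (O₁ ∩ O₂)) = ∅ := by
    rw [Set.eq_empty_iff_forall_notMem]
    rintro z ⟨hzt, hz1, hz2⟩
    have hzZ := hts hzt
    simp only [hO₁, hO₂, Set.mem_union, Set.mem_setOf_eq] at hz1 hz2
    rcases hz1 with h1 | h1 <;> rcases hz2 with h2 | h2
    · linarith
    · -- z.1 < d and d - δL < z.1 and z.2 < m : but left side values are > m
      have hLz := hL z.1 h2.1 h1
      rcases hzZ.2 with hy | hy
      · have h3 := abs_lt.mp hLz.1
        rw [hy] at h2; linarith [h3.1, h2.2]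
      · have h3 := abs_lt.mp hLz.2
        rw [hy] at h2; linarith [h3.1, h2.2]
    · -- d < z.1 < d + δR and m < z.2 : but right side values are < m
      have hRz := hR z.1 h2 h1.1
      rcases hzZ.2 with hy | hy
      · have h3 := abs_lt.mp hRz.1
        rw [hy] at h1; linarith [h3.2, h1.2]
      · have h3 := abs_lt.mp hRz.2
        rw [hy] at h1; linarith [h3.2, h1.2]
    · linarith [h1.2, h2.2]
  have hpO₁ : p ∈ O₁ := by
    rcases hp1 with h | ⟨h1, h2⟩
    · left; exact h
    · right; exact ⟨by rw [h1]; linarith, by rw [h2]; exact hm1⟩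
  have hqO₂ : q ∈ O₂ := by
    rcases hq1 with h | ⟨h1, h2⟩
    · left; exact h
    · right; exact ⟨by rw [h1]; linarith, by rw [h2]; exact hm2⟩
  obtain ⟨w, hw⟩ := hconn O₁ O₂ ho₁ ho₂ hcov ⟨p, hp, hpO₁⟩ ⟨q, hq, hqO₂⟩
  rw [Set.eq_empty_iff_forall_notMem] at hdis
  exact hdis w hw

lemma zset_totdisc : IsTotallyDisconnected Zset := by
  intro t hts hconn
  intro p hp q hq
  by_contra hne
  rcases lt_trichotomy p.1 q.1 with hlt | heq | hgt
  · obtain ⟨n, k, h1, h2⟩ := exists_dyadic_btwn hlt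
    set d := (k:ℝ) / (2:ℝ)^n with hddef
    have hdIoo : d ∈ Set.Ioo (-1:ℝ) 1 := by
      have := (hts hp).1; have := (hts hq).1
      constructor
      · calc (-1:ℝ) < p.1 := (hts hp).1.1
          _ < d := h1
      · calc d < q.1 := h2
          _ < 1 := (hts hq).1.2
    exact sep hts hconn hdIoo (dyadic_val (n := n) (k := k)) hp hq (Or.inl h1) (Or.inl h2)
  · -- same x
    have hpZ := hts hp
    have hqZ := hts hq
    have hy : p.2 ≠ q.2 := fun h => hne (Prod.ext heq h)
    have hq2 := hqZ.2
    rw [← heq] at hq2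
    have hdy : ∃ (n : ℕ) (k : ℤ), (2:ℝ)^n * p.1 = (k:ℝ) := by
      by_contra hno
      push_neg at hno
      have hsmsp := sm_eq_sp_of_nondyadic hno
      apply hy
      rcases hpZ.2 with h1 | h1 <;> rcases hq2 with h2 | h2 <;> rw [h1, h2] <;>
        first | rfl | exact hsmsp | exact hsmsp.symm
    obtain ⟨n, k, hnk⟩ := hdy
    rcases hpZ.2 with h1 | h1 <;> rcases hq2 with h2 | h2
    · exact hy (h1.trans h2.symm)
    · exact sep hts hconn ⟨hpZ.1.1, hpZ.1.2⟩ hnk hp hq (Or.inr ⟨rfl, h1⟩)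
        (Or.inr ⟨heq.symm, h2⟩)
    · exact sep hts hconn ⟨hpZ.1.1, hpZ.1.2⟩ hnk hq hp (Or.inr ⟨heq.symm, h2⟩)
        (Or.inr ⟨rfl, h1⟩)
    · exact hy (h1.trans h2.symm)
  · obtain ⟨n, k, h1, h2⟩ := exists_dyadic_btwn hgt
    set d := (k:ℝ) / (2:ℝ)^n with hddef
    have hdIoo : d ∈ Set.Ioo (-1:ℝ) 1 := by
      constructor
      · calc (-1:ℝ) < q.1 := (hts hq).1.1
          _ < d := h1
      · calc d < p.1 := h2
          _ < 1 := (hts hp).1.2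
    exact sep hts hconn hdIoo (dyadic_val (n := n) (k := k)) hq hp (Or.inl h1) (Or.inl h2)
-- part 6: Z meets every continuous graph

lemma zset_barrier (g : ℝ → ℝ) (hg : ContinuousOn g (Set.Icc (-1:ℝ) 1)) :
    ∃ x ∈ Set.Ioo (-1:ℝ) 1, (x, g x) ∈ Zset := by
  obtain ⟨C, hC⟩ := isCompact_Icc.exists_bound_of_continuousOn hg
  have hC0 : (0:ℝ) ≤ C := le_trans (norm_nonneg _) (hC (-1) (by norm_num))
  set η : ℝ := min (1/2) (1/(4*(C+5))) with hη
  have hηpos : 0 < η := by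
    apply lt_min (by norm_num)
    positivity
  have hη2 : η ≤ 1/2 := min_le_left _ _
  have hη3 : η ≤ 1/(4*(C+5)) := min_le_right _ _
  set xL : ℝ := -1 + η with hxL
  set xR : ℝ := 1 - η with hxR
  have hxLIoo : xL ∈ Set.Ioo (-1:ℝ) 1 := ⟨by linarith, by linarith⟩
  have hxRIoo : xR ∈ Set.Ioo (-1:ℝ) 1 := ⟨by linarith, by linarith⟩
  have habs : ∀ x ∈ Set.Ioo (-1:ℝ) 1, |g x| ≤ C := by
    intro x hx
    have := hC x (Set.mem_Icc_of_Ioo hx)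
    simpa [Real.norm_eq_abs] using this
  -- rr bounds near endpoints
  have hηC : η * (4*(C+5)) ≤ 1 := by
    have h4 : (0:ℝ) < 4*(C+5) := by positivity
    calc η * (4*(C+5)) ≤ (1/(4*(C+5))) * (4*(C+5)) := by
          apply mul_le_mul_of_nonneg_right hη3 (le_of_lt h4)
      _ = 1 := by field_simp
  have hrrL : rr xL ≤ -(C+5) := by
    rw [rr, hxL]
    have hDpos : 0 < 1 - (-1+η)^2 := by nlinarith
    rw [div_le_iff₀ hDpos]
    nlinarith
  have hrrR : ∀ x, xR ≤ x → x < 1 → C + 5 ≤ rr x := by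
    intro x h1 h2
    rw [rr]
    have hx0 : (1:ℝ)/2 ≤ x := by rw [hxR] at h1; linarith
    have hDpos : 0 < 1 - x^2 := by nlinarith
    rw [le_div_iff₀ hDpos]
    have hD2 : 1 - x^2 ≤ 2*(1-x) := by nlinarith
    have h1x : 1 - x ≤ η := by rw [hxR] at h1; linarith
    nlinarith
  -- the set A
  set A : Set ℝ := {x | x ∈ Set.Ioo (-1:ℝ) 1 ∧ sm x < g x} with hA
  have hxLA : xL ∈ A := by
    refine ⟨hxLIoo, ?_⟩
    have hb := jm_bd (abs_le.mpr ⟨hxLIoo.1.le, hxLIoo.2.le⟩)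
    have hgb := habs xL hxLIoo
    have := abs_le.mp hb
    have := abs_le.mp hgb
    rw [sm]; nlinarith [hrrL]
  have hAub : ∀ x ∈ A, x ≤ xR := by
    intro x hx
    by_contra hcon
    push_neg at hcon
    have h1 : C + 5 ≤ rr x := hrrR x hcon.le hx.1.2
    have hb := jm_bd (abs_le.mpr ⟨hx.1.1.le, hx.1.2.le⟩)
    have hgb := habs x hx.1
    have := abs_le.mp hb
    have := abs_le.mp hgb
    have := hx.2
    rw [sm] at this
    linarith
  have hAne : A.Nonempty := ⟨xL, hxLA⟩
  have hAbdd : BddAbove A := ⟨xR, fun x hx => hAub x hx⟩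
  set T : ℝ := sSup A with hT
  have hTxL : xL ≤ T := le_csSup hAbdd hxLA
  have hTxR : T ≤ xR := csSup_le hAne hAub
  have hTIoo : T ∈ Set.Ioo (-1:ℝ) 1 := ⟨by linarith [hxLIoo.1], by linarith [hxRIoo.2]⟩
  have hgT : ContinuousAt g T :=
    hg.continuousAt (Icc_mem_nhds hTIoo.1 hTIoo.2)
  -- right approach: g T ≤ sp T
  have hright : g T ≤ sp T := by
    set u : ℕ → ℝ := fun n => T + (1 - T)/(2*(n+1)) with hu
    have hupos : ∀ n : ℕ, T < u n := by
      intro n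
      have : (0:ℝ) < (1 - T)/(2*(n+1)) := by
        apply div_pos (by linarith [hTIoo.2]) (by positivity)
      rw [hu]; simp only []; linarith
    have huIoo : ∀ n : ℕ, u n ∈ Set.Ioo (-1:ℝ) 1 := by
      intro n
      refine ⟨by linarith [hupos n, hTIoo.1], ?_⟩
      rw [hu]
      have h1 : (1 - T)/(2*(n+1)) ≤ (1-T)/2 := by
        apply div_le_div_of_nonneg_left (by linarith [hTIoo.2]) (by norm_num) (by push_cast; nlinarith [Nat.cast_nonneg (α := ℝ) n])
      simp only []
      linarith [hTIoo.2]
    have hut : Tendsto u atTop (𝓝 T) := by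
      rw [hu]
      have h0 : Tendsto (fun n : ℕ => (1 - T)/(2*(n+1))) atTop (𝓝 0) := by
        have := tendsto_one_div_add_atTop_nhds_zero_nat (𝕜 := ℝ)
        have h2 : Tendsto (fun n : ℕ => ((1-T)/2) * (1/(n+1))) atTop (𝓝 (((1-T)/2) * 0)) :=
          this.const_mul _
        simp only [mul_zero] at h2
        convert h2 using 2 with n
        field_simp
      have := h0.const_add T
      simpa using this
    have hnotA : ∀ n, g (u n) ≤ sm (u n) := by
      intro n
      by_contra hcon
      push_neg at hcon
      have : u n ∈ A := ⟨huIoo n, hcon⟩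
      have := le_csSup hAbdd this
      linarith [hupos n]
    have hsmt : Tendsto (fun n => sm (u n)) atTop (𝓝 (sp T)) :=
      (seqR hTIoo u hupos hut).1
    have hgt : Tendsto (fun n => g (u n)) atTop (𝓝 (g T)) :=
      hgT.tendsto.comp hut
    exact le_of_tendsto_of_tendsto' hgt hsmt hnotA
  -- left approach: sm T ≤ g T
  have hleft : sm T ≤ g T := by
    by_cases hTA : T ∈ A
    · exact hTA.2.le
    · -- approach from the left within A
      have hseq : ∀ n : ℕ, ∃ a ∈ A, T - 1/(n+1) < a := by
        intro n
        apply exists_lt_of_lt_csSup hAne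
        have : (0:ℝ) < 1/(n+1) := by positivity
        linarith
      choose a ha hal using hseq
      have haT : ∀ n, a n < T := by
        intro n
        rcases lt_or_eq_of_le (le_csSup hAbdd (ha n)) with h | h
        · exact h
        · exfalso; apply hTA; rw [hT, ← h]; exact ha n
      have hat : Tendsto a atTop (𝓝 T) := by
        rw [Metric.tendsto_atTop]
        intro ε hε
        obtain ⟨N, hN⟩ := exists_nat_gt (1/ε)
        refine ⟨N, fun n hn => ?_⟩
        rw [Real.dist_eq, abs_lt]
        have h1 : (1:ℝ)/(n+1) ≤ 1/(N+1) := by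
          apply div_le_div_of_nonneg_left (by norm_num) (by positivity)
          have : (N:ℝ) ≤ (n:ℝ) := Nat.cast_le.mpr hn
          linarith
        have h2 : (1:ℝ)/(N+1) < ε := by
          rw [div_lt_iff₀ (by positivity)]
          rw [div_lt_iff₀ hε] at hN
          nlinarith
        constructor
        · have := hal n; linarith
        · linarith [haT n]
      have hsmt : Tendsto (fun n => sm (a n)) atTop (𝓝 (sm T)) :=
        (seqL hTIoo a haT hat).1
      have hgt : Tendsto (fun n => g (a n)) atTop (𝓝 (g T)) :=
        hgT.tendsto.comp hat
      exact le_of_tendsto_of_tendsto' hsmt hgt (fun n => (ha n).2.le)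
  have hsp : sp T ≤ sm T := sp_le_sm T
  have : g T = sp T := le_antisymm hright (by linarith)
  exact ⟨T, hTIoo, hTIoo, Or.inr this⟩
-- part 7: properties of Xset and final assembly

lemma xset_countable : Xset.Countable := by
  apply Set.Countable.mono _ (Set.countable_range (fun p : ℕ × ℤ => (p.2:ℝ)/(2:ℝ)^p.1))
  rintro x ⟨hx, n, k, hnk⟩
  refine ⟨(n, k), ?_⟩
  simp only []
  have h2n : ((2:ℝ)^n) ≠ 0 := by positivity
  field_simp
  linarith [hnk]

lemma xset_sub : Xset ⊆ Set.Ioo (-1:ℝ) 1 := fun x hx => hx.1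

lemma xset_dense : Set.Ioo (-1:ℝ) 1 ⊆ closure Xset := by
  intro x hx
  rw [Metric.mem_closure_iff]
  intro ε hε
  obtain ⟨n, hn⟩ := exists_pow_lt_of_lt_one (show (0:ℝ) < min ε (x+1) by
    apply lt_min hε; linarith [hx.1]) (show (2⁻¹:ℝ) < 1 by norm_num)
  have h2n : (0:ℝ) < (2:ℝ)^n := by positivity
  have h2i : (2⁻¹:ℝ)^n = ((2:ℝ)^n)⁻¹ := by rw [inv_pow]
  set d : ℝ := (⌊(2:ℝ)^n * x⌋ : ℝ)/(2:ℝ)^n with hd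
  have hdle : d ≤ x := by
    rw [hd, div_le_iff₀ h2n]
    have := Int.floor_le ((2:ℝ)^n * x)
    linarith
  have hdgt : x - ((2:ℝ)^n)⁻¹ < d := by
    rw [hd, lt_div_iff₀ h2n]
    have := Int.lt_floor_add_one ((2:ℝ)^n * x)
    have hinv : ((2:ℝ)^n)⁻¹ * (2:ℝ)^n = 1 := inv_mul_cancel₀ (ne_of_gt h2n)
    nlinarith
  have hsmall : ((2:ℝ)^n)⁻¹ < min ε (x+1) := by rw [← h2i]; exact hn
  have hdIoo : d ∈ Set.Ioo (-1:ℝ) 1 := by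
    constructor
    · have h1 : ((2:ℝ)^n)⁻¹ < x + 1 := lt_of_lt_of_le hsmall (min_le_right _ _)
      linarith
    · calc d ≤ x := hdle
        _ < 1 := hx.2
  refine ⟨d, ⟨hdIoo, n, ⌊(2:ℝ)^n * x⌋, dyadic_val⟩, ?_⟩
  rw [Real.dist_eq, abs_lt]
  have h1 : ((2:ℝ)^n)⁻¹ < ε := lt_of_lt_of_le hsmall (min_le_left _ _)
  constructor <;> [linarith; linarith]

lemma zset_unique : ∀ x ∈ Set.Ioo (-1:ℝ) 1 \ Xset, ∃! y : ℝ, (x, y) ∈ Zset := by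
  rintro x ⟨hx, hnx⟩
  have hnd : ∀ (n : ℕ) (k : ℤ), (2:ℝ)^n * x ≠ (k:ℝ) := by
    intro n k h
    exact hnx ⟨hx, n, k, h⟩
  have heq : sm x = sp x := sm_eq_sp_of_nondyadic hnd
  refine ⟨sm x, ⟨hx, Or.inl rfl⟩, ?_⟩
  rintro y ⟨_, hy | hy⟩
  · exact hy
  · simp only [] at hy; rw [heq]; exact hy

lemma zset_double : ∀ x ∈ Xset, ∃ y₁ y₂ : ℝ, y₁ ≠ y₂ ∧ {y : ℝ | (x, y) ∈ Zset} = {y₁, y₂} := by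
  rintro x ⟨hx, n, k, hnk⟩
  refine ⟨sm x, sp x, ?_, ?_⟩
  · have := sp_lt_sm_of_dyadic hnk
    exact ne_of_gt this
  · ext y
    simp only [Set.mem_setOf_eq, Set.mem_insert_iff, Set.mem_singleton_iff]
    constructor
    · rintro ⟨_, h | h⟩
      · left; exact h
      · right; exact h
    · rintro (h | h)
      · exact ⟨hx, Or.inl h⟩
      · exact ⟨hx, Or.inr h⟩

theorem stmt_7 :
    ∃ Z : Set (ℝ × ℝ),
      IsClosed Z ∧
      (∀ p ∈ Z, p.1 ∈ Set.Ioo (-1 : ℝ) 1) ∧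
      IsTotallyDisconnected Z ∧
      (∀ g : ℝ → ℝ, ContinuousOn g (Set.Icc (-1 : ℝ) 1) →
        ∃ x ∈ Set.Ioo (-1 : ℝ) 1, (x, g x) ∈ Z) ∧
      ∃ X : Set ℝ,
        X.Countable ∧ X ⊆ Set.Ioo (-1 : ℝ) 1 ∧
        Set.Ioo (-1 : ℝ) 1 ⊆ closure X ∧
        (∀ x ∈ Set.Ioo (-1 : ℝ) 1 \ X, ∃! y : ℝ, (x, y) ∈ Z) ∧
        (∀ x ∈ X, ∃ y₁ y₂ : ℝ, y₁ ≠ y₂ ∧ {y : ℝ | (x, y) ∈ Z} = {y₁, y₂}) := by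
  exact ⟨Zset, zset_closed, fun p hp => hp.1, zset_totdisc, zset_barrier,
    Xset, xset_countable, xset_sub, xset_dense, zset_unique, zset_double⟩
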